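/- Amalgamation of normed spaces: let A and (B_j)_{j∈J} be normed spaces over ℝ (or ℂ) and let φ_j : A → B_j be linear isometric embeddings for each j in an index set J. Then there exist a normed space C and linear isometric embeddings ψ_j : B_j → C such that ψ_j ∘ φ_j = ψ_k ∘ φ_k for all j, k ∈ J. -/

import Mathlib

universe u

open Metric

section AmalgAux

variable {𝕜 : Type} [RCLike 𝕜] {J : Type u} [DecidableEq J]
  {B : J → Type u} [∀ j, NormedAddCommGroup (B j)] [∀ j, NormedSpace 𝕜 (B j)]

lemma lpSingle_zero' (i : J) : (lp.single 1 i (0 : B i) : lp B 1) = 0 := by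
  apply lp.ext; funext m
  by_cases h : m = i
  · subst h; simp [lp.single_apply_self]
  · simp [lp.single_apply_ne _ _ _ h]

lemma lpSingle_add' (i : J) (a b : B i) :
    (lp.single 1 i (a + b) : lp B 1) = lp.single 1 i a + lp.single 1 i b := by
  apply lp.ext; funext m
  by_cases h : m = i
  · subst h; simp [lp.single_apply_self]
  · simp [lp.single_apply_ne _ _ _ h]

/-- `lp.single` as a linear map. -/
noncomputable def lpSingleₗ (i : J) : B i →ₗ[𝕜] lp B 1 where
  toFun := lp.single 1 i
  map_add' := lpSingle_add' i
  map_smul' c a := lp.single_smul 1 i c a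

lemma norm_lpSingle (j : J) (b : B j) : ‖(lp.single 1 j b : lp B 1)‖ = ‖b‖ := by
  have := lp.norm_single (E := B) (p := 1) (by simp) j b
  simpa using this

variable {A : Type u} [NormedAddCommGroup A] [NormedSpace 𝕜 A]
  (φ : ∀ j, A →ₗᵢ[𝕜] B j)

lemma amalg_span_char (w : lp B 1)
    (hw : w ∈ Submodule.span 𝕜
      {x : lp B 1 | ∃ (v : A) (j k : J),
        x = lp.single 1 j (φ j v) - lp.single 1 k (φ k v)}) :
    ∃ u : J →₀ A, (u.sum fun _ v => v) = 0 ∧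
      w = u.sum fun i v => lp.single 1 i (φ i v) := by
  induction hw using Submodule.span_induction with
  | mem x hx =>
      obtain ⟨v, j, k, rfl⟩ := hx
      by_cases hjk : j = k
      · subst hjk
        exact ⟨0, by simp, by simp⟩
      · refine ⟨Finsupp.single j v + Finsupp.single k (-v), ?_, ?_⟩
        · rw [Finsupp.sum_add_index' (fun _ => rfl) (fun _ _ _ => rfl),
            Finsupp.sum_single_index rfl, Finsupp.sum_single_index rfl]
          simp
        · rw [Finsupp.sum_add_index' (fun i => by simp [lpSingle_zero'])
            (fun i a b => by rw [map_add, lpSingle_add']),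
            Finsupp.sum_single_index (by simp [lpSingle_zero']),
            Finsupp.sum_single_index (by simp [lpSingle_zero'])]
          simp [sub_eq_add_neg]
  | zero => exact ⟨0, by simp, by simp⟩
  | add x y _ _ hx hy =>
      obtain ⟨u₁, hu₁, rfl⟩ := hx
      obtain ⟨u₂, hu₂, rfl⟩ := hy
      refine ⟨u₁ + u₂, ?_, ?_⟩
      · rw [Finsupp.sum_add_index' (fun _ => rfl) (fun _ _ _ => rfl), hu₁, hu₂, add_zero]
      · rw [Finsupp.sum_add_index' (fun i => by simp [lpSingle_zero'])
          (fun i a b => by rw [map_add, lpSingle_add'])]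
  | smul c x _ hx =>
      obtain ⟨u, hu, rfl⟩ := hx
      refine ⟨c • u, ?_, ?_⟩
      · rw [Finsupp.sum_smul_index' (fun _ => rfl), ← Finsupp.smul_sum, hu, smul_zero]
      · rw [Finsupp.sum_smul_index' (fun i => by simp [lpSingle_zero']), Finsupp.smul_sum]
        exact Finsupp.sum_congr fun i _ => by rw [map_smul, lp.single_smul]

lemma amalg_norm_le (j : J) (b : B j) (u : J →₀ A) (hu : (u.sum fun _ v => v) = 0) :
    ‖b‖ ≤ ‖(lp.single 1 j b + u.sum fun i v => lp.single 1 i (φ i v) : lp B 1)‖ := by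
  classical
  set t := u.support.erase j with ht
  have hjt : j ∉ t := Finset.notMem_erase j _
  have hsupp : u.support ⊆ insert j t := by
    intro i hi
    by_cases h : i = j
    · exact h ▸ Finset.mem_insert_self j t
    · exact Finset.mem_insert_of_mem (Finset.mem_erase.mpr ⟨h, hi⟩)
  -- extend both Finsupp sums to the finset `insert j t`
  have hsum1 : (u.sum fun _ v => v) = ∑ i ∈ insert j t, u i :=
    Finset.sum_subset hsupp fun i _ hi => Finsupp.notMem_support_iff.mp hi
  have hsum2 : (u.sum fun i v => (lp.single 1 i (φ i v) : lp B 1))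
      = ∑ i ∈ insert j t, lp.single 1 i (φ i (u i)) :=
    Finset.sum_subset hsupp fun i _ hi => by
      simp only [Finsupp.notMem_support_iff.mp hi, map_zero, lpSingle_zero']
  have hA : (0 : A) = u j + ∑ i ∈ t, u i := by
    rw [← Finset.sum_insert hjt, ← hsum1, hu]
  have huj : ‖u j‖ ≤ ∑ i ∈ t, ‖u i‖ := by
    rw [add_eq_zero_iff_eq_neg.mp hA.symm, norm_neg]
    exact norm_sum_le t _
  -- rewrite the lp element as a sum of singles of one function
  set g : ∀ i, B i := Function.update (fun i => φ i (u i)) j (b + φ j (u j)) with hg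
  have hgj : g j = b + φ j (u j) := Function.update_self _ _ _
  have hgi : ∀ i ∈ t, g i = φ i (u i) := fun i hi =>
    Function.update_of_ne (Finset.mem_erase.mp hi).1 _ _
  have hx : (lp.single 1 j b + u.sum fun i v => lp.single 1 i (φ i v) : lp B 1)
      = ∑ i ∈ insert j t, lp.single 1 i (g i) := by
    rw [hsum2, Finset.sum_insert hjt, Finset.sum_insert hjt, ← add_assoc, hgj, lpSingle_add']
    congr 1
    exact Finset.sum_congr rfl fun i hi => by rw [hgi i hi]
  have hnorm : ‖(lp.single 1 j b + u.sum fun i v => lp.single 1 i (φ i v) : lp B 1)‖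
      = ∑ i ∈ insert j t, ‖g i‖ := by
    have := lp.norm_sum_single (E := B) (p := 1) (by simp) g (insert j t)
    simpa [hx] using this
  rw [hnorm, Finset.sum_insert hjt, hgj]
  have h1 : ∑ i ∈ t, ‖g i‖ = ∑ i ∈ t, ‖u i‖ :=
    Finset.sum_congr rfl fun i hi => by rw [hgi i hi, (φ i).norm_map]
  have h2 : ‖b‖ ≤ ‖b + φ j (u j)‖ + ‖φ j (u j)‖ := by
    have := norm_add_le (b + φ j (u j)) (-(φ j (u j)))
    simpa using this
  rw [(φ j).norm_map] at h2
  linarith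

end AmalgAux

/-- Amalgamation of normed spaces: given linear isometric embeddings
`φ_j : A → B_j` of normed spaces over `𝕜` (`𝕜 = ℝ` or `ℂ`), there exist a normed
space `C` and linear isometric embeddings `ψ_j : B_j → C` with
`ψ_j ∘ φ_j = ψ_k ∘ φ_k` for all `j, k`. -/
theorem amalgamation_of_normed_spaces {𝕜 : Type} [RCLike 𝕜] {J : Type u}
    (A : Type u) [NormedAddCommGroup A] [NormedSpace 𝕜 A]
    (B : J → Type u) [∀ j, NormedAddCommGroup (B j)] [∀ j, NormedSpace 𝕜 (B j)]
    (φ : ∀ j, A →ₗᵢ[𝕜] B j) :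
    ∃ (C : Type u) (_ : NormedAddCommGroup C) (_ : NormedSpace 𝕜 C)
      (ψ : ∀ j, B j →ₗᵢ[𝕜] C),
      ∀ j k, (ψ j).comp (φ j) = (ψ k).comp (φ k) := by
  classical
  set S : Set (lp B 1) := {x : lp B 1 | ∃ (v : A) (j k : J),
    x = lp.single 1 j (φ j v) - lp.single 1 k (φ k v)} with hS
  set W₀ : Submodule 𝕜 (lp B 1) := Submodule.span 𝕜 S with hW₀
  set W : Submodule 𝕜 (lp B 1) := W₀.topologicalClosure with hW
  haveI : IsClosed (W : Set (lp B 1)) := W₀.isClosed_topologicalClosure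
  refine ⟨(lp B 1) ⧸ W, inferInstance, inferInstance,
    fun j => ⟨W.mkQ.comp (lpSingleₗ j), ?_⟩, ?_⟩
  · intro b
    have hle : ‖W.mkQ (lp.single 1 j b)‖ ≤ ‖b‖ := by
      rw [Submodule.mkQ_apply, ← norm_lpSingle j b]
      exact Submodule.Quotient.norm_mk_le _ _
    have hkey : ∀ y ∈ W₀, ‖b‖ ≤ dist (lp.single 1 j b : lp B 1) y := by
      intro y hy
      obtain ⟨u, hu0, hyu⟩ := amalg_span_char φ (-y) (neg_mem hy)
      rw [dist_eq_norm, sub_eq_add_neg, hyu]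
      exact amalg_norm_le φ j b u hu0
    have hge : ‖b‖ ≤ ‖W.mkQ (lp.single 1 j b)‖ := by
      have hmk : ‖W.mkQ (lp.single 1 j b)‖
          = infDist (lp.single 1 j b : lp B 1) (W : Set (lp B 1)) :=
        QuotientAddGroup.norm_mk _
      rw [hmk, hW, Submodule.topologicalClosure_coe, infDist_closure]
      by_contra h
      push_neg at h
      obtain ⟨y, hy, hlt⟩ := (infDist_lt_iff ⟨0, W₀.zero_mem⟩).mp h
      exact absurd (hkey y hy) (by linarith)
    exact le_antisymm hle hge
  · intro j k
    ext v
    refine (Submodule.Quotient.eq W).mpr ?_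
    exact Submodule.le_topologicalClosure W₀ (Submodule.subset_span ⟨v, j, k, rfl⟩)
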